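/- Let o be a commutative ring, B a topological group, B_0 an open subgroup of B such that the category of smooth o-representations of B_0 is noetherian (every o[B_0]-submodule of a finite type smooth representation of B_0 is of finite type). Let 0 -> V' -> V -> V'' -> 0 be an exact sequence of smooth representations of B over o in which V' and V'' are of finite presentation relative to B_0. Then there exist o[B_0]-submodules V_0' of V', V_0 of V, V_0'' of V'', generating V', V, V'' respectively as o[B]-modules, forming an exact sequence 0 -> V_0' -> V_0 -> V_0'' -> 0 of o[B_0]-modules, and such that the three associated presentations ind_{B_0}^B(V_0') -> V', ind_{B_0}^B(V_0) -> V, ind_{B_0}^B(V_0'') -> V'' are finite. -/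

import Mathlib

noncomputable section
attribute [local instance] Classical.propDecidable
open Pointwise


/-! ### Generalities on smooth representations over a commutative ring `o` -/

section RepPrelim

variable (o : Type) [CommRing o]

/-- The `o`-submodule of `V` generated by `{s • w | s ∈ S, w ∈ W}`; written `<S W>` in the paper. -/
def gspan {H : Type} (V : Type) [AddCommGroup V] [Module o V] [SMul H V]
    (S : Set H) (W : Set V) : Submodule o V :=
  Submodule.span o {v : V | ∃ s ∈ S, ∃ w ∈ W, v = s • w}

/-- A submodule `N` is stable under the set `S` of group elements. -/
def IsStableSub {H : Type} (V : Type) [AddCommGroup V] [Module o V] [SMul H V]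
    (S : Set H) (N : Submodule o V) : Prop :=
  ∀ s ∈ S, ∀ v ∈ N, s • v ∈ N

/-- `N` is a finitely generated module over `o[S]`. -/
def IsFGOver {H : Type} (V : Type) [AddCommGroup V] [Module o V] [SMul H V]
    (S : Set H) (N : Submodule o V) : Prop :=
  ∃ X : Finset V, (X : Set V) ⊆ (N : Set V) ∧ N = gspan o V S (X : Set V)

/-- The submodule of `S`-invariants. -/
def invariantsSub (H : Type) [Group H] (V : Type) [AddCommGroup V] [Module o V]
    [DistribMulAction H V] [SMulCommClass H o V] (S : Set H) : Submodule o V where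
  carrier := {v | ∀ s ∈ S, s • v = v}
  add_mem' := by intro a b ha hb s hs; rw [smul_add, ha s hs, hb s hs]
  zero_mem' := by intro s hs; exact smul_zero s
  smul_mem' := by intro c v hv s hs; rw [smul_comm, hv s hs]

/-- The action of a fixed group element as an `o`-linear map. -/
def actLin (H : Type) [Group H] (V : Type) [AddCommGroup V] [Module o V]
    [DistribMulAction H V] [SMulCommClass H o V] (g : H) : V →ₗ[o] V where
  toFun v := g • v
  map_add' := smul_add g
  map_smul' c v := by simpa using smul_comm g c v

/-- `V` has finite length as an `o[H]`-module: it admits a composition series of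
`H`-stable `o`-submodules. -/
def IsFiniteLengthRep (H : Type) [Group H] (V : Type) [AddCommGroup V] [Module o V]
    [DistribMulAction H V] : Prop :=
  ∃ (n : ℕ) (c : Fin (n + 1) → Submodule o V),
    c 0 = ⊥ ∧ c (Fin.last n) = ⊤ ∧
    (∀ i, IsStableSub o V (Set.univ : Set H) (c i)) ∧
    (∀ i : Fin n, c i.castSucc < c i.succ) ∧
    (∀ i : Fin n, ∀ N : Submodule o V, IsStableSub o V (Set.univ : Set H) N →
      c i.castSucc ≤ N → N ≤ c i.succ → N = c i.castSucc ∨ N = c i.succ)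

/-- Smoothness: each vector has open stabilizer. -/
def IsSmoothRep (H : Type) [Group H] [TopologicalSpace H] (V : Type) [AddCommGroup V]
    [Module o V] [DistribMulAction H V] : Prop :=
  ∀ v : V, IsOpen {h : H | h • v = v}

/-- Admissibility: invariants under any compact open subgroup form a f.g. `o`-module. -/
def IsAdmissibleRep (H : Type) [Group H] [TopologicalSpace H] (V : Type) [AddCommGroup V]
    [Module o V] [DistribMulAction H V] [SMulCommClass H o V] : Prop :=
  ∀ H' : Subgroup H, IsCompact (H' : Set H) → IsOpen (H' : Set H) →
    (invariantsSub o H V (H' : Set H)).FG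

end RepPrelim

/-! ### Compact induction `ind_{S}^{H}(V₀)` and finite presentations -/

section Induction

variable (o : Type) [CommRing o]
variable {H : Type} [Group H] {V : Type} [AddCommGroup V] [Module o V]
variable [DistribMulAction H V] [SMulCommClass H o V]

/-- The compact induction `ind_S^H (V₀)`, realized as the `o`-module of functions
`f : H → V` with values in `V₀`, satisfying `f (s * h) = s • f h` for `s ∈ S`, and
supported on finitely many right cosets `S * x`. -/
def Ind (S : Subgroup H) (V0 : Submodule o V) : Submodule o (H → V) where
  carrier := {f | (∀ h, f h ∈ V0) ∧ (∀ s ∈ S, ∀ h, f (s * h) = s • f h) ∧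
      ∃ X : Finset H, ∀ h, f h ≠ 0 → ∃ s ∈ S, ∃ x ∈ X, h = s * x}
  add_mem' := by
    rintro f g ⟨hf1, hf2, Xf, hXf⟩ ⟨hg1, hg2, Xg, hXg⟩
    refine ⟨fun h => V0.add_mem (hf1 h) (hg1 h),
      fun s hs h => by simp only [Pi.add_apply, hf2 s hs h, hg2 s hs h, smul_add],
      Xf ∪ Xg, fun h hh => ?_⟩
    by_cases hf : f h = 0
    · have hg : g h ≠ 0 := fun h0 => hh (by simp [Pi.add_apply, hf, h0])
      obtain ⟨s, hs, x, hx, hxx⟩ := hXg h hg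
      exact ⟨s, hs, x, Finset.mem_union_right _ hx, hxx⟩
    · obtain ⟨s, hs, x, hx, hxx⟩ := hXf h hf
      exact ⟨s, hs, x, Finset.mem_union_left _ hx, hxx⟩
  zero_mem' :=
    ⟨fun _ => V0.zero_mem, fun s _ _ => (smul_zero s).symm, ∅, fun h hh => absurd rfl hh⟩
  smul_mem' := by
    rintro c f ⟨hf1, hf2, Xf, hXf⟩
    refine ⟨fun h => V0.smul_mem c (hf1 h),
      fun s hs h => by
        simp only [Pi.smul_apply, hf2 s hs h]
        exact (smul_comm s c (f h)).symm,
      Xf, fun h hh => hXf h (fun h0 => hh (by simp [Pi.smul_apply, h0]))⟩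

variable {S : Subgroup H} {V0 : Submodule o V}

/-- Right translation, giving the `H`-action on the compact induction. -/
def indTrans (g : H) (f : H → V) : H → V := fun h => f (h * g)

lemma indTrans_mem (g : H) {f : H → V} (hf : f ∈ Ind o S V0) : indTrans g f ∈ Ind o S V0 := by
  obtain ⟨h1, h2, X, hX⟩ := hf
  refine ⟨fun h => h1 _, fun s hs h => by
      simpa [indTrans, mul_assoc] using h2 s hs (h * g),
    X.image (· * g⁻¹), fun h hh => ?_⟩
  obtain ⟨s, hs, x, hx, hxx⟩ := hX (h * g) hh
  refine ⟨s, hs, x * g⁻¹, Finset.mem_image_of_mem _ hx, ?_⟩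
  rw [← mul_assoc, ← hxx, mul_assoc, mul_inv_cancel, mul_one]

instance : SMul H (Ind o S V0) :=
  ⟨fun g f => ⟨indTrans g (f : H → V), indTrans_mem o g f.2⟩⟩

lemma ind_smul_apply (g : H) (f : Ind o S V0) (h : H) :
    ((g • f : Ind o S V0) : H → V) h = (f : H → V) (h * g) := rfl

instance : MulAction H (Ind o S V0) where
  one_smul f := Subtype.ext (funext fun h => by simp [ind_smul_apply])
  mul_smul g1 g2 f := Subtype.ext (funext fun h => by simp [ind_smul_apply, mul_assoc])

instance : DistribMulAction H (Ind o S V0) where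
  smul_add g f1 f2 := Subtype.ext (funext fun h => rfl)
  smul_zero g := Subtype.ext (funext fun h => rfl)

instance : SMulCommClass H o (Ind o S V0) :=
  ⟨fun g c f => Subtype.ext (funext fun h => rfl)⟩

/-- The function `[1, v]` supported on `S`, with value `v` at `1`. -/
def unitFn (S : Subgroup H) (v : V) : H → V := fun h => if h ∈ S then h • v else 0

lemma unitFn_mem (hst : IsStableSub o V (S : Set H) V0) {v : V} (hv : v ∈ V0) :
    unitFn S v ∈ Ind o S V0 := by
  refine ⟨fun h => ?_, fun s hs h => ?_, {1}, fun h hh => ?_⟩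
  · by_cases h1 : h ∈ S
    · simpa [unitFn, h1] using hst h h1 v hv
    · simp [unitFn, h1, V0.zero_mem]
  · by_cases h1 : h ∈ S
    · have hsh : s * h ∈ S := S.mul_mem hs h1
      simp [unitFn, h1, hsh, mul_smul]
    · have hsh : s * h ∉ S := fun hc => h1 (by simpa using S.mul_mem (S.inv_mem hs) hc)
      simp [unitFn, h1, hsh]
  · by_cases h1 : h ∈ S
    · exact ⟨h, h1, 1, Finset.mem_singleton_self 1, (mul_one h).symm⟩
    · simp [unitFn, h1] at hh

/-- The element `[1, v]` of the compact induction. -/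
def unitElt (hst : IsStableSub o V (S : Set H) V0) {v : V} (hv : v ∈ V0) : Ind o S V0 :=
  ⟨unitFn S v, unitFn_mem o hst hv⟩

/-- `P` is the natural presentation map `ind_S^H (V₀) → V`: it is `H`-equivariant and sends
`[1, v]` to `v`. -/
def IsPresMap (hst : IsStableSub o V (S : Set H) V0) (P : Ind o S V0 →ₗ[o] V) : Prop :=
  (∀ (g : H) (f : Ind o S V0), P (g • f) = g • P f) ∧
  (∀ v (hv : v ∈ V0), P (unitElt o hst hv) = v)

end Induction

/-- `V₀ ⊆ V` yields a finite presentation `ind_S^H (V₀) → V`: `V₀` is an `S`-stable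
`o`-submodule, finitely generated over `o[S]`, generating `V` over `o[H]`, and the kernel of
the natural presentation map is finitely generated over `o[H]`. -/
def FinitelyPresentedVia (o : Type) [CommRing o] {H : Type} [Group H] {V : Type}
    [AddCommGroup V] [Module o V] [DistribMulAction H V] [SMulCommClass H o V]
    (S : Subgroup H) (V0 : Submodule o V) : Prop :=
  ∃ hst : IsStableSub o V (S : Set H) V0,
    IsFGOver o V (S : Set H) V0 ∧ gspan o V (Set.univ : Set H) (V0 : Set V) = ⊤ ∧
    ∃ P : Ind o S V0 →ₗ[o] V, IsPresMap o hst P ∧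
      IsFGOver o (Ind o S V0) (Set.univ : Set H) (LinearMap.ker P)

/-- `V` is of finite presentation relative to the open subgroup `S`. -/
def HasFinitePres (o : Type) [CommRing o] {H : Type} [Group H] (V : Type)
    [AddCommGroup V] [Module o V] [DistribMulAction H V] [SMulCommClass H o V]
    (S : Subgroup H) : Prop :=
  ∃ V0 : Submodule o V, FinitelyPresentedVia o S V0

/-! ### Auxiliary lemmas on `gspan` -/

section AuxGspan

variable (o : Type) [CommRing o]
variable {H : Type} [Group H] {V : Type} [AddCommGroup V] [Module o V]
variable [DistribMulAction H V] [SMulCommClass H o V]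

lemma gspan_le_iff {S : Set H} {W : Set V} {N : Submodule o V} :
    gspan o V S W ≤ N ↔ ∀ s ∈ S, ∀ w ∈ W, s • w ∈ N := by
  constructor
  · intro h s hs w hw
    exact h (Submodule.subset_span ⟨s, hs, w, hw, rfl⟩)
  · intro h
    refine Submodule.span_le.mpr ?_
    rintro v ⟨s, hs, w, hw, rfl⟩
    exact h s hs w hw

lemma mem_gspan {S : Set H} {W : Set V} {s : H} (hs : s ∈ S) {w : V} (hw : w ∈ W) :
    s • w ∈ gspan o V S W :=
  Submodule.subset_span ⟨s, hs, w, hw, rfl⟩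

lemma subset_gspan {S : Set H} (h1 : (1 : H) ∈ S) {W : Set V} {w : V} (hw : w ∈ W) :
    w ∈ gspan o V S W := by
  simpa using mem_gspan o h1 hw

lemma gspan_mono {S S' : Set H} {W W' : Set V} (hS : S ⊆ S') (hW : W ⊆ W') :
    gspan o V S W ≤ gspan o V S' W' := by
  refine Submodule.span_mono ?_
  rintro v ⟨s, hs, w, hw, rfl⟩
  exact ⟨s, hS hs, w, hW hw, rfl⟩

lemma gspan_union {S : Set H} (A B : Set V) :
    gspan o V S (A ∪ B) = gspan o V S A ⊔ gspan o V S B := by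
  rw [gspan, gspan, gspan, ← Submodule.span_union]
  congr 1
  ext v
  constructor
  · rintro ⟨s, hs, w, hw | hw, rfl⟩
    · exact Or.inl ⟨s, hs, w, hw, rfl⟩
    · exact Or.inr ⟨s, hs, w, hw, rfl⟩
  · rintro (⟨s, hs, w, hw, rfl⟩ | ⟨s, hs, w, hw, rfl⟩)
    · exact ⟨s, hs, w, Or.inl hw, rfl⟩
    · exact ⟨s, hs, w, Or.inr hw, rfl⟩

lemma gspan_stable {S : Set H} (hS : ∀ a ∈ S, ∀ b ∈ S, a * b ∈ S) (W : Set V) :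
    IsStableSub o V S (gspan o V S W) := by
  intro s hs v hv
  have h1 : actLin o H V s v ∈ Submodule.map (actLin o H V s) (gspan o V S W) :=
    Submodule.mem_map_of_mem hv
  rw [gspan, Submodule.map_span] at h1
  have h2 : ⇑(actLin o H V s) '' {v : V | ∃ a ∈ S, ∃ w ∈ W, v = a • w}
      ⊆ {v : V | ∃ a ∈ S, ∃ w ∈ W, v = a • w} := by
    rintro _ ⟨_, ⟨a, ha, w, hw, rfl⟩, rfl⟩
    exact ⟨s * a, hS s hs a ha, w, hw, (mul_smul s a w).symm⟩
  have h3 := Submodule.span_mono h2 h1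
  simpa [gspan, actLin] using h3

lemma stable_sup {S : Set H} {N N' : Submodule o V}
    (hN : IsStableSub o V S N) (hN' : IsStableSub o V S N') :
    IsStableSub o V S (N ⊔ N') := by
  intro s hs v hv
  obtain ⟨a, ha, b, hb, rfl⟩ := Submodule.mem_sup.mp hv
  rw [smul_add]
  exact Submodule.add_mem_sup (hN s hs a ha) (hN' s hs b hb)

end AuxGspan

/-- Pushforward of `gspan` along a compatible pair of maps. -/
lemma map_gspan (o : Type) [CommRing o] {V1 V2 : Type} [AddCommGroup V1] [Module o V1]
    [AddCommGroup V2] [Module o V2] {G1 G2 : Type} [SMul G1 V1] [SMul G2 V2]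
    (F : V1 →ₗ[o] V2) (ρ : G1 → G2) {S : Set G1}
    (hcomp : ∀ s ∈ S, ∀ v : V1, F (s • v) = ρ s • F v) (W : Set V1) :
    Submodule.map F (gspan o V1 S W) = gspan o V2 (ρ '' S) (F '' W) := by
  rw [gspan, gspan, Submodule.map_span]
  congr 1
  ext v2
  constructor
  · rintro ⟨_, ⟨s, hs, w, hw, rfl⟩, rfl⟩
    exact ⟨ρ s, ⟨s, hs, rfl⟩, F w, ⟨w, hw, rfl⟩, hcomp s hs w⟩
  · rintro ⟨_, ⟨s, hs, rfl⟩, _, ⟨w, hw, rfl⟩, rfl⟩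
    exact ⟨s • w, ⟨s, hs, w, hw, rfl⟩, hcomp s hs w⟩

set_option linter.unusedVariables false
set_option linter.unusedSectionVars false

section AuxInd

variable (o : Type) [CommRing o]
variable {H : Type} [Group H] {V : Type} [AddCommGroup V] [Module o V]
variable [DistribMulAction H V] [SMulCommClass H o V]
variable {S : Subgroup H} {V0 : Submodule o V}

lemma unitElt_congr (hst : IsStableSub o V (S : Set H) V0) {v w : V} (hv : v ∈ V0)
    (hw : w ∈ V0) (hvw : v = w) : unitElt o hst hv = unitElt o hst hw := by
  subst hvw; rfl

lemma unitElt_zero (hst : IsStableSub o V (S : Set H) V0) (h0 : (0 : V) ∈ V0) :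
    unitElt o hst h0 = 0 := by
  apply Subtype.ext; funext h
  show unitFn S (0 : V) h = 0
  unfold unitFn
  by_cases h1 : h ∈ S <;> simp [h1]

lemma unitElt_add (hst : IsStableSub o V (S : Set H) V0) {v w : V} (hv : v ∈ V0)
    (hw : w ∈ V0) (hvw : v + w ∈ V0) :
    unitElt o hst hvw = unitElt o hst hv + unitElt o hst hw := by
  apply Subtype.ext; funext h
  show unitFn S (v + w) h = unitFn S v h + unitFn S w h
  unfold unitFn
  by_cases h1 : h ∈ S <;> simp [h1, smul_add]

lemma unitElt_smul_o (hst : IsStableSub o V (S : Set H) V0) (a : o) {v : V} (hv : v ∈ V0)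
    (hav : a • v ∈ V0) : unitElt o hst hav = a • unitElt o hst hv := by
  apply Subtype.ext; funext h
  show unitFn S (a • v) h = a • unitFn S v h
  unfold unitFn
  by_cases h1 : h ∈ S <;> simp [h1, smul_comm]

lemma unitElt_smul_mem (hst : IsStableSub o V (S : Set H) V0) {s : H} (hs : s ∈ S)
    {v : V} (hv : v ∈ V0) (hsv : s • v ∈ V0) :
    unitElt o hst hsv = s • unitElt o hst hv := by
  apply Subtype.ext; funext h
  show unitFn S (s • v) h = unitFn S v (h * s)
  unfold unitFn
  by_cases h1 : h ∈ S
  · rw [if_pos h1, if_pos (S.mul_mem h1 hs), mul_smul]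
  · rw [if_neg h1, if_neg (fun hc => h1 (by simpa using S.mul_mem hc (S.inv_mem hs)))]

variable {V2 : Type} [AddCommGroup V2] [Module o V2]
variable [DistribMulAction H V2] [SMulCommClass H o V2]

/-- Pushforward of compact induction along an equivariant linear map. -/
def indMap (F : V →ₗ[o] V2) (hF : ∀ (g : H) (v : V), F (g • v) = g • F v)
    {W0 : Submodule o V2} (hFW : ∀ v ∈ V0, F v ∈ W0) :
    Ind o S V0 →ₗ[o] Ind o S W0 where
  toFun f := ⟨F ∘ f.1, by
    obtain ⟨h1, h2, X, hX⟩ := f.2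
    refine ⟨fun h => hFW _ (h1 h), fun s hs h => by
        simp only [Function.comp_apply, h2 s hs h, hF], X, fun h hh => hX h ?_⟩
    intro h0
    exact hh (by simp [Function.comp_apply, h0])⟩
  map_add' f g := Subtype.ext (funext fun h => F.map_add _ _)
  map_smul' a f := Subtype.ext (funext fun h => F.map_smul a _)

lemma indMap_coe (F : V →ₗ[o] V2) (hF : ∀ (g : H) (v : V), F (g • v) = g • F v)
    {W0 : Submodule o V2} (hFW : ∀ v ∈ V0, F v ∈ W0) (f : Ind o S V0) :
    ((indMap o F hF hFW f : Ind o S W0) : H → V2) = F ∘ (f : H → V) := rfl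

lemma indMap_equivariant (F : V →ₗ[o] V2) (hF : ∀ (g : H) (v : V), F (g • v) = g • F v)
    {W0 : Submodule o V2} (hFW : ∀ v ∈ V0, F v ∈ W0) (g : H) (f : Ind o S V0) :
    indMap o F hF hFW (g • f) = g • indMap o F hF hFW f :=
  Subtype.ext (funext fun h => rfl)

lemma indMap_unit (F : V →ₗ[o] V2) (hF : ∀ (g : H) (v : V), F (g • v) = g • F v)
    {W0 : Submodule o V2} (hFW : ∀ v ∈ V0, F v ∈ W0)
    (hst : IsStableSub o V (S : Set H) V0) (hstW : IsStableSub o V2 (S : Set H) W0)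
    {v : V} (hv : v ∈ V0) :
    indMap o F hF hFW (unitElt o hst hv) = unitElt o hstW (hFW v hv) := by
  apply Subtype.ext; funext h
  show F (unitFn S v h) = unitFn S (F v) h
  unfold unitFn
  by_cases h1 : h ∈ S <;> simp [h1, hF]

end AuxInd

section PresMap

variable (o : Type) [CommRing o]
variable {H : Type} [Group H] {V : Type} [AddCommGroup V] [Module o V]
variable [DistribMulAction H V] [SMulCommClass H o V]
variable {S : Subgroup H} {V0 : Submodule o V}

/-- The quotient of `H` by right cosets of `S`. -/
abbrev RQ (S : Subgroup H) := Quotient (QuotientGroup.rightRel S)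

/-- The function on cosets `c ↦ (out c)⁻¹ • f (out c)`. -/
def cosetFn (S : Subgroup H) (f : H → V) (c : RQ S) : V :=
  (Quotient.out c)⁻¹ • f (Quotient.out c)

lemma smul_eq_on_coset {f : H → V} (hf : f ∈ Ind o S V0) {h k : H}
    (hrel : (QuotientGroup.rightRel S) h k) : h⁻¹ • f h = k⁻¹ • f k := by
  have hs : k * h⁻¹ ∈ S := QuotientGroup.rightRel_apply.mp hrel
  have h2 : f k = (k * h⁻¹) • f h := by
    have := hf.2.1 _ hs h
    rwa [inv_mul_cancel_right] at this
  rw [h2, smul_smul]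
  congr 1
  group

lemma cosetFn_mk {f : H → V} (hf : f ∈ Ind o S V0) (h : H) :
    cosetFn S f (Quotient.mk _ h) = h⁻¹ • f h :=
  smul_eq_on_coset o hf (Quotient.mk_out h)

lemma cosetFn_support_finite {f : H → V} (hf : f ∈ Ind o S V0) :
    (Function.support (cosetFn S f)).Finite := by
  obtain ⟨-, -, X, hX⟩ := hf
  apply Set.Finite.subset (X.finite_toSet.image (Quotient.mk _))
  intro c hc
  have hfo : f (Quotient.out c) ≠ 0 := by
    intro h0
    apply hc
    simp [cosetFn, h0]
  obtain ⟨s, hs, x, hx, hxx⟩ := hX _ hfo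
  refine ⟨x, hx, ?_⟩
  rw [← Quotient.out_eq c]
  exact Quotient.sound (QuotientGroup.rightRel_apply.mpr
    (by rw [hxx, mul_inv_cancel_right]; exact hs))

/-- `g • ·` as an additive monoid hom. -/
def gsmulHom (g : H) : V →+ V := AddMonoidHom.mk' (fun v => g • v) (smul_add g)

/-- `a • ·` (scalars) as an additive monoid hom. -/
def osmulHom (a : o) : V →+ V := AddMonoidHom.mk' (fun v => a • v) (smul_add a)

/-- The canonical presentation map `ind_S^H(V₀) → V`. -/
def presMap (S : Subgroup H) (V0 : Submodule o V) : Ind o S V0 →ₗ[o] V where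
  toFun f := ∑ᶠ c : RQ S, cosetFn S (f : H → V) c
  map_add' f g := by
    have hf := cosetFn_support_finite o f.2
    have hg := cosetFn_support_finite o g.2
    have key : ∀ c : RQ S, cosetFn S ((f + g : Ind o S V0) : H → V) c
        = cosetFn S (f : H → V) c + cosetFn S (g : H → V) c := by
      intro c
      simp [cosetFn, smul_add]
    calc (∑ᶠ c : RQ S, cosetFn S ((f + g : Ind o S V0) : H → V) c)
        = ∑ᶠ c : RQ S, (cosetFn S (f : H → V) c + cosetFn S (g : H → V) c) := by
          exact finsum_congr key
      _ = _ := finsum_add_distrib hf hg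
  map_smul' a f := by
    have hf := cosetFn_support_finite o f.2
    have key : ∀ c : RQ S, cosetFn S ((a • f : Ind o S V0) : H → V) c
        = osmulHom o a (cosetFn S (f : H → V) c) := by
      intro c
      simp [cosetFn, osmulHom, smul_comm]
    calc (∑ᶠ c : RQ S, cosetFn S ((a • f : Ind o S V0) : H → V) c)
        = ∑ᶠ c : RQ S, osmulHom o a (cosetFn S (f : H → V) c) := finsum_congr key
      _ = osmulHom o a (∑ᶠ c : RQ S, cosetFn S (f : H → V) c) :=
          ((osmulHom o a).map_finsum hf).symm
      _ = _ := rfl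

lemma presMap_apply (f : Ind o S V0) :
    presMap o S V0 f = ∑ᶠ c : RQ S, cosetFn S (f : H → V) c := rfl

/-- Right translation by `g` on the coset space, as an equivalence. -/
def eQ (S : Subgroup H) (g : H) : RQ S ≃ RQ S where
  toFun := Quotient.map (· * g) (by
    intro a b hab
    refine QuotientGroup.rightRel_apply.mpr ?_
    have h1 := QuotientGroup.rightRel_apply.mp hab
    have h2 : b * g * (a * g)⁻¹ = b * a⁻¹ := by group
    rw [h2]; exact h1)
  invFun := Quotient.map (· * g⁻¹) (by
    intro a b hab
    refine QuotientGroup.rightRel_apply.mpr ?_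
    have h1 := QuotientGroup.rightRel_apply.mp hab
    have h2 : b * g⁻¹ * (a * g⁻¹)⁻¹ = b * a⁻¹ := by group
    rw [h2]; exact h1)
  left_inv c := by
    induction c using Quotient.ind with
    | _ a => show Quotient.mk _ (a * g * g⁻¹) = Quotient.mk _ a
             rw [mul_inv_cancel_right]
  right_inv c := by
    induction c using Quotient.ind with
    | _ a => show Quotient.mk _ (a * g⁻¹ * g) = Quotient.mk _ a
             rw [inv_mul_cancel_right]

lemma cosetFn_smul (g : H) (f : Ind o S V0) (c : RQ S) :
    cosetFn S ((g • f : Ind o S V0) : H → V) c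
      = gsmulHom (V := V) g (cosetFn S (f : H → V) (eQ S g c)) := by
  induction c using Quotient.ind with
  | _ a =>
    have h1 : cosetFn S ((g • f : Ind o S V0) : H → V) (Quotient.mk _ a)
        = a⁻¹ • (f : H → V) (a * g) := by
      rw [cosetFn_mk o (g • f : Ind o S V0).2 a]
      rfl
    have h2 : eQ S g (Quotient.mk _ a) = Quotient.mk _ (a * g) := rfl
    rw [h1, h2, cosetFn_mk o f.2 (a * g)]
    show a⁻¹ • (f : H → V) (a * g) = g • (a * g)⁻¹ • (f : H → V) (a * g)
    rw [smul_smul]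
    congr 1
    group

lemma presMap_equivariant (g : H) (f : Ind o S V0) :
    presMap o S V0 (g • f) = g • presMap o S V0 f := by
  have hf := cosetFn_support_finite o f.2
  have hfin : (Function.support fun c => cosetFn S (f : H → V) (eQ S g c)).Finite := by
    have : (Function.support fun c => cosetFn S (f : H → V) (eQ S g c))
        = (eQ S g) ⁻¹' (Function.support (cosetFn S (f : H → V))) := rfl
    rw [this]
    exact Set.Finite.preimage ((eQ S g).injective.injOn) hf
  calc presMap o S V0 (g • f)
      = ∑ᶠ c : RQ S, gsmulHom (V := V) g (cosetFn S (f : H → V) (eQ S g c)) :=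
        finsum_congr (cosetFn_smul o g f)
    _ = gsmulHom (V := V) g (∑ᶠ c : RQ S, cosetFn S (f : H → V) (eQ S g c)) :=
        ((gsmulHom (V := V) g).map_finsum hfin).symm
    _ = gsmulHom (V := V) g (∑ᶠ c : RQ S, cosetFn S (f : H → V) c) := by
        rw [finsum_comp_equiv (eQ S g)]
    _ = g • presMap o S V0 f := rfl

lemma presMap_unit (hst : IsStableSub o V (S : Set H) V0) {v : V} (hv : v ∈ V0) :
    presMap o S V0 (unitElt o hst hv) = v := by
  have key : ∀ c : RQ S, cosetFn S (unitFn S v) c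
      = if c = Quotient.mk _ (1 : H) then v else 0 := by
    intro c
    induction c using Quotient.ind with
    | _ a =>
      rw [cosetFn_mk o (unitFn_mem o hst hv) a]
      have hiff : (Quotient.mk (QuotientGroup.rightRel S) a
          = Quotient.mk (QuotientGroup.rightRel S) (1 : H)) ↔ a ∈ S := by
        rw [Quotient.eq, QuotientGroup.rightRel_apply]
        simp
      by_cases h1 : a ∈ S
      · rw [if_pos (hiff.mpr h1)]
        show a⁻¹ • (if a ∈ S then a • v else 0) = v
        rw [if_pos h1, smul_smul, inv_mul_cancel, one_smul]
      · rw [if_neg (fun hc => h1 (hiff.mp hc))]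
        show a⁻¹ • (if a ∈ S then a • v else 0) = 0
        rw [if_neg h1, smul_zero]
  show (∑ᶠ c : RQ S, cosetFn S (unitFn S v) c) = v
  rw [finsum_congr key, finsum_eq_single _ (Quotient.mk _ (1 : H))
    (fun x hx => if_neg hx)]
  exact if_pos rfl

lemma presMap_isPres (hst : IsStableSub o V (S : Set H) V0) :
    IsPresMap o hst (presMap o S V0) :=
  ⟨presMap_equivariant o, fun v hv => presMap_unit o hst hv⟩

end PresMap

section Decomp

variable (o : Type) [CommRing o]
variable {H : Type} [Group H] {V : Type} [AddCommGroup V] [Module o V]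
variable [DistribMulAction H V] [SMulCommClass H o V]
variable {S : Subgroup H} {V0 : Submodule o V}

/-- Every element of the compact induction is an `o[H]`-combination of the `[1,v]`. -/
lemma ind_decompose (hst : IsStableSub o V (S : Set H) V0) (f : Ind o S V0) :
    f ∈ gspan o (Ind o S V0) (Set.univ : Set H)
      {w : Ind o S V0 | ∃ v, ∃ hv : v ∈ V0, w = unitElt o hst hv} := by
  obtain ⟨hmem, heq, X, hX⟩ := f.2
  set T : Finset (RQ S) := X.image (Quotient.mk _) with hT
  set F : RQ S → Ind o S V0 :=
    fun c => (Quotient.out c)⁻¹ • unitElt o hst (hmem (Quotient.out c)) with hF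
  have hterm : ∀ (c : RQ S) (h : H), ((F c : Ind o S V0) : H → V) h
      = if h * (Quotient.out c)⁻¹ ∈ S then (f : H → V) h else 0 := by
    intro c h
    show unitFn S ((f : H → V) (Quotient.out c)) (h * (Quotient.out c)⁻¹) = _
    unfold unitFn
    by_cases hc : h * (Quotient.out c)⁻¹ ∈ S
    · rw [if_pos hc, if_pos hc]
      have := heq _ hc (Quotient.out c)
      rw [inv_mul_cancel_right] at this
      exact this.symm
    · rw [if_neg hc, if_neg hc]
  have hsum : f = ∑ c ∈ T, F c := by
    apply Subtype.ext
    have hco : ((∑ c ∈ T, F c : Ind o S V0) : H → V)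
        = ∑ c ∈ T, ((F c : Ind o S V0) : H → V) := by
      simp
    funext h
    rw [hco, Finset.sum_apply]
    by_cases hfh : (f : H → V) h = 0
    · rw [hfh]
      symm
      refine Finset.sum_eq_zero fun c hc => ?_
      rw [hterm c h]
      by_cases hc2 : h * (Quotient.out c)⁻¹ ∈ S
      · rw [if_pos hc2, hfh]
      · rw [if_neg hc2]
    · obtain ⟨s, hs, x, hx, hxx⟩ := hX h hfh
      set c0 : RQ S := Quotient.mk _ h with hc0
      have hc0T : c0 ∈ T := by
        refine Finset.mem_image.mpr ⟨x, hx, ?_⟩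
        exact Quotient.sound (QuotientGroup.rightRel_apply.mpr
          (by rw [hxx, mul_inv_cancel_right]; exact hs))
      rw [Finset.sum_eq_single c0]
      · rw [hterm c0 h, if_pos]
        exact QuotientGroup.rightRel_apply.mp (Quotient.mk_out h)
      · intro c hcT hne
        rw [hterm c h]
        refine if_neg fun hcS => hne ?_
        rw [hc0, ← Quotient.out_eq c]
        exact Quotient.sound (QuotientGroup.rightRel_apply.mpr hcS)
      · intro hc0n
        exact absurd hc0T hc0n
  rw [hsum]
  refine Submodule.sum_mem _ fun c hc => ?_
  exact Submodule.subset_span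
    ⟨(Quotient.out c)⁻¹, Set.mem_univ _, unitElt o hst (hmem (Quotient.out c)),
      ⟨(f : H → V) (Quotient.out c), hmem (Quotient.out c), rfl⟩, rfl⟩

variable {W : Type} [AddCommGroup W] [Module o W] [DistribMulAction H W] [SMulCommClass H o W]

/-- Two equivariant linear maps out of an induction agreeing on the `[1,v]` agree. -/
lemma presMap_ext (hst : IsStableSub o V (S : Set H) V0)
    (Q1 Q2 : Ind o S V0 →ₗ[o] W)
    (he1 : ∀ (g : H) (f : Ind o S V0), Q1 (g • f) = g • Q1 f)
    (he2 : ∀ (g : H) (f : Ind o S V0), Q2 (g • f) = g • Q2 f)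
    (hu : ∀ v (hv : v ∈ V0), Q1 (unitElt o hst hv) = Q2 (unitElt o hst hv)) :
    Q1 = Q2 := by
  ext f
  have hf := ind_decompose o hst f
  refine Submodule.span_induction ?_ ?_ ?_ ?_ hf
  · rintro x ⟨b, -, w, ⟨v, hv, rfl⟩, rfl⟩
    rw [he1, he2, hu v hv]
  · simp
  · intro x y hx hy h1 h2
    rw [map_add, map_add, h1, h2]
  · intro a x hx h1
    rw [map_smul, map_smul, h1]

/-- Any presentation map agrees with the canonical one. -/
lemma eq_presMap (hst : IsStableSub o V (S : Set H) V0) {P : Ind o S V0 →ₗ[o] V}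
    (hP : IsPresMap o hst P) : P = presMap o S V0 := by
  refine presMap_ext o hst P (presMap o S V0) hP.1 (presMap_equivariant o) ?_
  intro v hv
  rw [hP.2 v hv, presMap_unit o hst hv]

end Decomp

section MainLemmas

variable (o : Type) [CommRing o]
variable {H : Type} [Group H] {V : Type} [AddCommGroup V] [Module o V]
variable [DistribMulAction H V] [SMulCommClass H o V]
variable {S : Subgroup H}

/-- If `V₀ ≤ V₁` generate the same representation, `V₁` is `o[S]`-f.g., and the kernel of the
presentation attached to `V₀` is f.g., then so is the kernel of the presentation of `V₁`. -/
lemma fg_ker_enlarge {V0 V1 : Submodule o V}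
    (hst : IsStableSub o V (S : Set H) V0) (hst2 : IsStableSub o V (S : Set H) V1)
    (hle : V0 ≤ V1)
    (hgen : gspan o V (Set.univ : Set H) (V0 : Set V) = ⊤)
    (hfg1 : IsFGOver o V (S : Set H) V1)
    (hker : IsFGOver o (Ind o S V0) (Set.univ : Set H) (LinearMap.ker (presMap o S V0))) :
    IsFGOver o (Ind o S V1) (Set.univ : Set H) (LinearMap.ker (presMap o S V1)) := by
  classical
  obtain ⟨X1, hX1sub, hX1eq⟩ := hfg1
  obtain ⟨R0, hR0sub, hR0eq⟩ := hker
  set P0 := presMap o S V0 with hP0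
  set P1 := presMap o S V1 with hP1
  set Φ : Ind o S V0 →ₗ[o] Ind o S V1 :=
    indMap o (LinearMap.id) (fun g v => rfl) (fun v hv => hle hv) with hΦ
  have hΦeq : ∀ (g : H) (f : Ind o S V0), Φ (g • f) = g • Φ f := fun g f =>
    indMap_equivariant o _ _ _ g f
  have hΦunit : ∀ {v : V} (hv : v ∈ V0), Φ (unitElt o hst hv) = unitElt o hst2 (hle hv) := by
    intro v hv
    exact indMap_unit o _ _ _ hst hst2 hv
  have hcomp : P1.comp Φ = P0 := by
    refine presMap_ext o hst (P1.comp Φ) P0 ?_ (presMap_equivariant o) ?_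
    · intro g f
      rw [LinearMap.comp_apply, LinearMap.comp_apply, hΦeq, presMap_equivariant]
    · intro v hv
      rw [LinearMap.comp_apply, hΦunit hv, hP1, presMap_unit o hst2, hP0, presMap_unit o hst]
  have hD : gspan o V (Set.univ : Set H) (V0 : Set V)
      ≤ Submodule.map P1 (LinearMap.range Φ) := by
    refine (gspan_le_iff o).mpr ?_
    intro b hb w hw
    refine Submodule.mem_map.mpr ⟨Φ (b • unitElt o hst hw), LinearMap.mem_range_self Φ _, ?_⟩
    have : P1 (Φ (b • unitElt o hst hw)) = P0 (b • unitElt o hst hw) := by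
      rw [← hcomp]; rfl
    rw [this, hP0, presMap_equivariant, presMap_unit o hst hw]
  have hlift : ∀ x ∈ X1, ∃ u : Ind o S V0, P1 (Φ u) = x := by
    intro x hx
    have hx2 : x ∈ gspan o V (Set.univ : Set H) (V0 : Set V) := by
      rw [hgen]; trivial
    obtain ⟨y, hy, hPy⟩ := Submodule.mem_map.mp (hD hx2)
    obtain ⟨u, rfl⟩ := LinearMap.mem_range.mp hy
    exact ⟨u, hPy⟩
  choose! ufun hufun using hlift
  set rfun : {x // x ∈ X1} → Ind o S V1 :=
    fun xq => unitElt o hst2 (hX1sub (Finset.mem_coe.mpr xq.2)) - Φ (ufun xq.1) with hrfun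
  have hrker : ∀ xq : {x // x ∈ X1}, rfun xq ∈ LinearMap.ker P1 := by
    intro xq
    rw [LinearMap.mem_ker, hrfun]
    simp only [map_sub]
    rw [hP1, presMap_unit o hst2, hufun xq.1 xq.2]
    · exact sub_self _
  set R1 : Finset (Ind o S V1) := X1.attach.image rfun with hR1
  set GFin : Finset (Ind o S V1) := R1 ∪ R0.image Φ with hGFin
  have hGsub : (GFin : Set (Ind o S V1)) ⊆ (LinearMap.ker P1 : Set (Ind o S V1)) := by
    intro w hw
    rcases Finset.mem_union.mp (Finset.mem_coe.mp hw) with hw1 | hw2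
    · obtain ⟨xq, -, rfl⟩ := Finset.mem_image.mp hw1
      exact hrker xq
    · obtain ⟨r, hr, rfl⟩ := Finset.mem_image.mp hw2
      have hrk : r ∈ LinearMap.ker P0 := hR0sub (Finset.mem_coe.mpr hr)
      have : P1 (Φ r) = P0 r := by rw [← hcomp]; rfl
      simp only [SetLike.mem_coe, LinearMap.mem_ker, this, LinearMap.mem_ker.mp hrk]
  set N : Submodule o (Ind o S V1) :=
    gspan o (Ind o S V1) (Set.univ : Set H) (R1 : Set (Ind o S V1)) ⊔ LinearMap.range Φ
    with hN
  have hNstable : IsStableSub o (Ind o S V1) (Set.univ : Set H) N := by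
    refine stable_sup o (gspan_stable o (fun a _ b _ => Set.mem_univ _) _) ?_
    intro s hs v hv
    obtain ⟨u, rfl⟩ := LinearMap.mem_range.mp hv
    exact LinearMap.mem_range.mpr ⟨s • u, hΦeq s u⟩
  have hNunit : ∀ v (hv : v ∈ V1), unitElt o hst2 hv ∈ N := by
    have key : ∀ x, x ∈ gspan o V (S : Set H) (X1 : Set V) →
        ∀ hx : x ∈ V1, unitElt o hst2 hx ∈ N := by
      intro x hxg
      refine Submodule.span_induction
        (p := fun x _ => ∀ hx : x ∈ V1, unitElt o hst2 hx ∈ N) ?_ ?_ ?_ ?_ hxg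
      · rintro y ⟨s, hs, w, hw, rfl⟩ hy
        have hw' : w ∈ X1 := Finset.mem_coe.mp hw
        have hwV1 : w ∈ V1 := hX1sub hw
        rw [unitElt_smul_mem o hst2 hs hwV1 hy]
        refine hNstable s (Set.mem_univ s) _ ?_
        have hsplit : unitElt o hst2 hwV1 = rfun ⟨w, hw'⟩ + Φ (ufun w) := by
          rw [hrfun]
          exact (sub_add_cancel _ _).symm
        rw [hsplit]
        refine Submodule.add_mem_sup ?_ (LinearMap.mem_range_self Φ _)
        refine subset_gspan o (Set.mem_univ 1) ?_
        exact Finset.mem_coe.mpr (Finset.mem_image.mpr ⟨⟨w, hw'⟩, X1.mem_attach _, rfl⟩)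
      · intro h0
        rw [unitElt_zero]
        exact N.zero_mem
      · intro x y hxg hyg ihx ihy hxy
        have hxV : x ∈ V1 := by rw [hX1eq]; exact hxg
        have hyV : y ∈ V1 := by rw [hX1eq]; exact hyg
        rw [unitElt_add o hst2 hxV hyV hxy]
        exact N.add_mem (ihx hxV) (ihy hyV)
      · intro a x hxg ih hax
        have hxV : x ∈ V1 := by rw [hX1eq]; exact hxg
        rw [unitElt_smul_o o hst2 a hxV hax]
        exact N.smul_mem a (ih hxV)
    intro v hv
    exact key v (by rw [← hX1eq]; exact hv) hv
  have hfN : ∀ f : Ind o S V1, f ∈ N := by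
    intro f
    have hdec := ind_decompose o hst2 f
    have hsub : gspan o (Ind o S V1) (Set.univ : Set H)
        {w : Ind o S V1 | ∃ v, ∃ hv : v ∈ V1, w = unitElt o hst2 hv} ≤ N := by
      refine (gspan_le_iff o).mpr ?_
      rintro b - w ⟨v, hv, rfl⟩
      exact hNstable b trivial _ (hNunit v hv)
    exact hsub hdec
  refine ⟨GFin, hGsub, ?_⟩
  apply le_antisymm
  · intro f hf
    obtain ⟨u, hu, t, ht, huv⟩ := Submodule.mem_sup.mp (hfN f)
    obtain ⟨g, rfl⟩ := LinearMap.mem_range.mp ht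
    have hRker : gspan o (Ind o S V1) (Set.univ : Set H) (R1 : Set (Ind o S V1))
        ≤ LinearMap.ker P1 := by
      refine (gspan_le_iff o).mpr ?_
      rintro b - w hw
      obtain ⟨xq, -, rfl⟩ := Finset.mem_image.mp (Finset.mem_coe.mp hw)
      rw [LinearMap.mem_ker, hP1, presMap_equivariant, ← hP1,
        LinearMap.mem_ker.mp (hrker xq), smul_zero]
    have huker : P1 u = 0 := LinearMap.mem_ker.mp (hRker hu)
    have h2 : P1 u + P1 (Φ g) = 0 := by
      rw [← map_add, huv]
      exact LinearMap.mem_ker.mp hf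
    rw [huker, zero_add] at h2
    have hgker : g ∈ LinearMap.ker P0 := by
      rw [LinearMap.mem_ker, ← hcomp]
      exact h2
    have hΦg : Φ g ∈ gspan o (Ind o S V1) (Set.univ : Set H) (⇑Φ '' (R0 : Set (Ind o S V0))) := by
      have hm : Φ g ∈ Submodule.map Φ (LinearMap.ker P0) := Submodule.mem_map_of_mem hgker
      rw [hR0eq, map_gspan o Φ id (fun s _ v => hΦeq s v)] at hm
      rwa [Set.image_id] at hm
    have hfinal : f ∈ gspan o (Ind o S V1) (Set.univ : Set H) (R1 : Set (Ind o S V1))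
        ⊔ gspan o (Ind o S V1) (Set.univ : Set H) (⇑Φ '' (R0 : Set (Ind o S V0))) := by
      rw [← huv]
      exact Submodule.add_mem_sup hu hΦg
    rw [show ((GFin : Set (Ind o S V1)))
        = (R1 : Set (Ind o S V1)) ∪ (⇑Φ '' (R0 : Set (Ind o S V0))) from by
      rw [hGFin, Finset.coe_union, Finset.coe_image, Finset.coe_image], gspan_union]
    exact hfinal
  · refine (gspan_le_iff o).mpr ?_
    rintro b - w hw
    have hwk : w ∈ LinearMap.ker P1 := hGsub hw
    rw [LinearMap.mem_ker, hP1, presMap_equivariant, ← hP1, LinearMap.mem_ker.mp hwk, smul_zero]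

end MainLemmas

section ExactLemma

variable (o : Type) [CommRing o]
variable {H : Type} [Group H] {V : Type} [AddCommGroup V] [Module o V]
variable [DistribMulAction H V] [SMulCommClass H o V]
variable {V' : Type} [AddCommGroup V'] [Module o V']
variable [DistribMulAction H V'] [SMulCommClass H o V']
variable {V'' : Type} [AddCommGroup V''] [Module o V'']
variable [DistribMulAction H V''] [SMulCommClass H o V'']
variable {S : Subgroup H}

lemma fg_ker_exact
    (ι : V' →ₗ[o] V) (hιinj : Function.Injective ⇑ι)
    (hιeq : ∀ (b : H) (v : V'), ι (b • v) = b • ι v)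
    (π : V →ₗ[o] V'') (hπeq : ∀ (b : H) (v : V), π (b • v) = b • π v)
    (hexact : LinearMap.range ι = LinearMap.ker π)
    {V0' : Submodule o V'} {V0 : Submodule o V} {V0'' : Submodule o V''}
    (hst' : IsStableSub o V' (S : Set H) V0') (hst : IsStableSub o V (S : Set H) V0)
    (hst'' : IsStableSub o V'' (S : Set H) V0'')
    (hgen' : gspan o V' (Set.univ : Set H) (V0' : Set V') = ⊤)
    (hι0 : Submodule.map ι V0' = V0 ⊓ LinearMap.ker π)
    (hπ0 : Submodule.map π V0 = V0'')
    (hker' : IsFGOver o (Ind o S V0') (Set.univ : Set H) (LinearMap.ker (presMap o S V0')))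
    (hker'' : IsFGOver o (Ind o S V0'') (Set.univ : Set H) (LinearMap.ker (presMap o S V0''))) :
    IsFGOver o (Ind o S V0) (Set.univ : Set H) (LinearMap.ker (presMap o S V0)) := by
  classical
  obtain ⟨R', hR'sub, hR'eq⟩ := hker'
  obtain ⟨R'', hR''sub, hR''eq⟩ := hker''
  set P' := presMap o S V0' with hP'
  set P := presMap o S V0 with hPd
  set P'' := presMap o S V0'' with hP''
  have hιmem : ∀ v' ∈ V0', ι v' ∈ V0 := by
    intro v' hv'
    have : ι v' ∈ V0 ⊓ LinearMap.ker π := hι0 ▸ Submodule.mem_map_of_mem hv'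
    exact this.1
  have hπmem : ∀ v ∈ V0, π v ∈ V0'' := by
    intro v hv
    exact hπ0 ▸ Submodule.mem_map_of_mem hv
  set Φ : Ind o S V0' →ₗ[o] Ind o S V0 := indMap o ι hιeq hιmem with hΦ
  set Ψ : Ind o S V0 →ₗ[o] Ind o S V0'' := indMap o π hπeq hπmem with hΨ
  have hΦeq : ∀ (g : H) (f : Ind o S V0'), Φ (g • f) = g • Φ f := fun g f =>
    indMap_equivariant o _ _ _ g f
  have hΨeq : ∀ (g : H) (f : Ind o S V0), Ψ (g • f) = g • Ψ f := fun g f =>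
    indMap_equivariant o _ _ _ g f
  have hΦunit : ∀ {v' : V'} (hv' : v' ∈ V0'),
      Φ (unitElt o hst' hv') = unitElt o hst (hιmem v' hv') := by
    intro v' hv'
    exact indMap_unit o _ _ _ hst' hst hv'
  have hΨunit : ∀ {v : V} (hv : v ∈ V0),
      Ψ (unitElt o hst hv) = unitElt o hst'' (hπmem v hv) := by
    intro v hv
    exact indMap_unit o _ _ _ hst hst'' hv
  -- `P ∘ Φ = ι ∘ P'`
  have hPΦ : P.comp Φ = ι.comp P' := by
    refine presMap_ext o hst' (P.comp Φ) (ι.comp P') ?_ ?_ ?_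
    · intro g f
      rw [LinearMap.comp_apply, LinearMap.comp_apply, hΦeq, hPd, presMap_equivariant]
    · intro g f
      rw [LinearMap.comp_apply, LinearMap.comp_apply, hP', presMap_equivariant, hιeq]
    · intro v' hv'
      rw [LinearMap.comp_apply, LinearMap.comp_apply, hΦunit hv', hPd,
        presMap_unit o hst, hP', presMap_unit o hst']
  -- `P'' ∘ Ψ = π ∘ P`
  have hPΨ : P''.comp Ψ = π.comp P := by
    refine presMap_ext o hst (P''.comp Ψ) (π.comp P) ?_ ?_ ?_
    · intro g f
      rw [LinearMap.comp_apply, LinearMap.comp_apply, hΨeq, hP'', presMap_equivariant]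
    · intro g f
      rw [LinearMap.comp_apply, LinearMap.comp_apply, hPd, presMap_equivariant, hπeq]
    · intro v hv
      rw [LinearMap.comp_apply, LinearMap.comp_apply, hΨunit hv, hP'',
        presMap_unit o hst'', hPd, presMap_unit o hst]
  -- `Ψ ∘ Φ = 0`
  have hΨΦ : ∀ f : Ind o S V0', Ψ (Φ f) = 0 := by
    have hzero : (Ψ.comp Φ) = (0 : Ind o S V0' →ₗ[o] Ind o S V0'') := by
      refine presMap_ext o hst' (Ψ.comp Φ) 0 ?_ ?_ ?_
      · intro g f
        rw [LinearMap.comp_apply, LinearMap.comp_apply, hΦeq, hΨeq]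
      · intro g f
        rw [LinearMap.zero_apply, LinearMap.zero_apply, smul_zero]
      · intro v' hv'
        rw [LinearMap.comp_apply, hΦunit hv', hΨunit (hιmem v' hv'), LinearMap.zero_apply]
        have hz : π (ι v') = 0 := by
          have : ι v' ∈ LinearMap.ker π := hexact ▸ LinearMap.mem_range_self ι v'
          exact LinearMap.mem_ker.mp this
        rw [unitElt_congr o hst'' (hπmem _ (hιmem v' hv')) (V0''.zero_mem) hz]
        exact unitElt_zero o hst'' _
    intro f
    have := LinearMap.ext_iff.mp hzero f
    simpa using this
  -- surjectivity of `Ψ`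
  have hΨsurj : ∀ g'' : Ind o S V0'', g'' ∈ LinearMap.range Ψ := by
    intro g''
    have hdec := ind_decompose o hst'' g''
    have hsub : gspan o (Ind o S V0'') (Set.univ : Set H)
        {w : Ind o S V0'' | ∃ v'', ∃ hv'' : v'' ∈ V0'', w = unitElt o hst'' hv''}
        ≤ LinearMap.range Ψ := by
      refine (gspan_le_iff o).mpr ?_
      rintro b - w ⟨v'', hv'', rfl⟩
      obtain ⟨v, hv, hπv⟩ := Submodule.mem_map.mp (hπ0 ▸ hv'' : v'' ∈ Submodule.map π V0)
      refine LinearMap.mem_range.mpr ⟨b • unitElt o hst hv, ?_⟩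
      rw [hΨeq, hΨunit hv, unitElt_congr o hst'' (hπmem v hv) hv'' hπv]
    exact hsub hdec
  -- kernel of `Ψ` is the image of `Φ`
  have hkerΨ : ∀ f : Ind o S V0, Ψ f = 0 → ∃ g : Ind o S V0', Φ g = f := by
    intro f hf
    have hval : ∀ h : H, π ((f : H → V) h) = 0 := by
      intro h
      have := congrArg (fun x : Ind o S V0'' => (x : H → V'') h) hf
      simpa [hΨ, indMap_coe] using this
    have hmem : ∀ h : H, (f : H → V) h ∈ Submodule.map ι V0' := by
      intro h
      rw [hι0]
      exact ⟨f.2.1 h, LinearMap.mem_ker.mpr (hval h)⟩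
    have hchoice : ∀ h : H, ∃ v' ∈ V0', ι v' = (f : H → V) h := fun h =>
      Submodule.mem_map.mp (hmem h)
    choose gfun hg1 hg2 using hchoice
    have hgInd : gfun ∈ Ind o S V0' := by
      refine ⟨hg1, ?_, ?_⟩
      · intro s hs h
        apply hιinj
        rw [hg2, hιeq, hg2]
        exact f.2.2.1 s hs h
      · obtain ⟨X, hX⟩ := f.2.2.2
        refine ⟨X, fun h hh => hX h ?_⟩
        intro h0
        apply hh
        apply hιinj
        rw [hg2, h0, map_zero]
    refine ⟨⟨gfun, hgInd⟩, ?_⟩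
    apply Subtype.ext
    funext h
    exact hg2 h
  -- lift the generators of `ker P''`
  have hlift : ∀ r'' ∈ R'', ∃ r : Ind o S V0, P r = 0 ∧ Ψ r = r'' := by
    intro r'' hr''
    obtain ⟨a, ha⟩ := LinearMap.mem_range.mp (hΨsurj r'')
    have hπPa : π (P a) = 0 := by
      have := LinearMap.ext_iff.mp hPΨ a
      rw [LinearMap.comp_apply, LinearMap.comp_apply, ha] at this
      rw [← this]
      exact LinearMap.mem_ker.mp (hR''sub (Finset.mem_coe.mpr hr''))
    have hPa : P a ∈ gspan o V (Set.univ : Set H) (⇑ι '' (V0' : Set V')) := by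
      have h1 : P a ∈ LinearMap.range ι := by
        rw [hexact]
        exact LinearMap.mem_ker.mpr hπPa
      obtain ⟨w, hw⟩ := LinearMap.mem_range.mp h1
      have h2 : w ∈ gspan o V' (Set.univ : Set H) (V0' : Set V') := by
        rw [hgen']; trivial
      have h3 := Submodule.mem_map_of_mem (f := ι) h2
      rw [map_gspan o ι id (fun s _ v => hιeq s v)] at h3
      rw [Set.image_id] at h3
      rw [← hw]
      exact h3
    have hD : gspan o V (Set.univ : Set H) (⇑ι '' (V0' : Set V'))
        ≤ Submodule.map P (LinearMap.range Φ) := by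
      refine (gspan_le_iff o).mpr ?_
      rintro b - w ⟨v', hv', rfl⟩
      refine Submodule.mem_map.mpr
        ⟨Φ (b • unitElt o hst' hv'), LinearMap.mem_range_self Φ _, ?_⟩
      have h4 := LinearMap.ext_iff.mp hPΦ (b • unitElt o hst' hv')
      rw [LinearMap.comp_apply, LinearMap.comp_apply] at h4
      rw [h4, hP', presMap_equivariant, presMap_unit o hst' hv', hιeq]
    obtain ⟨y, hy, hPy⟩ := Submodule.mem_map.mp (hD hPa)
    obtain ⟨u, rfl⟩ := LinearMap.mem_range.mp hy
    refine ⟨a - Φ u, ?_, ?_⟩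
    · rw [map_sub, hPy, sub_self]
    · rw [map_sub, hΨΦ u, sub_zero, ha]
  choose! rfun hrP hrΨ using hlift
  set MFin : Finset (Ind o S V0) := R''.image rfun with hMFin
  set M : Submodule o (Ind o S V0) :=
    gspan o (Ind o S V0) (Set.univ : Set H) (MFin : Set (Ind o S V0)) with hM
  have hMker : M ≤ LinearMap.ker P := by
    refine (gspan_le_iff o).mpr ?_
    rintro b - w hw
    obtain ⟨r'', hr'', rfl⟩ := Finset.mem_image.mp (Finset.mem_coe.mp hw)
    rw [LinearMap.mem_ker, hPd, presMap_equivariant, ← hPd, hrP r'' hr'', smul_zero]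
  set GFin : Finset (Ind o S V0) := MFin ∪ R'.image Φ with hGFin
  have hGsub : (GFin : Set (Ind o S V0)) ⊆ (LinearMap.ker P : Set (Ind o S V0)) := by
    intro w hw
    rcases Finset.mem_union.mp (Finset.mem_coe.mp hw) with hw1 | hw2
    · obtain ⟨r'', hr'', rfl⟩ := Finset.mem_image.mp hw1
      exact LinearMap.mem_ker.mpr (hrP r'' hr'')
    · obtain ⟨r', hr', rfl⟩ := Finset.mem_image.mp hw2
      have h5 := LinearMap.ext_iff.mp hPΦ r'
      rw [LinearMap.comp_apply, LinearMap.comp_apply] at h5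
      have h6 : P' r' = 0 := LinearMap.mem_ker.mp (hR'sub (Finset.mem_coe.mpr hr'))
      simp only [SetLike.mem_coe, LinearMap.mem_ker, h5, h6, map_zero]
  refine ⟨GFin, hGsub, ?_⟩
  apply le_antisymm
  · intro f hf
    -- `Ψ f ∈ ker P''`
    have hΨfker : Ψ f ∈ LinearMap.ker P'' := by
      have h7 := LinearMap.ext_iff.mp hPΨ f
      rw [LinearMap.comp_apply, LinearMap.comp_apply] at h7
      rw [LinearMap.mem_ker, h7, LinearMap.mem_ker.mp hf, map_zero]
    have hE : gspan o (Ind o S V0'') (Set.univ : Set H) (R'' : Set (Ind o S V0''))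
        ≤ Submodule.map Ψ M := by
      refine (gspan_le_iff o).mpr ?_
      rintro b - r'' hr''
      have hr''F : r'' ∈ R'' := Finset.mem_coe.mp hr''
      refine Submodule.mem_map.mpr ⟨b • rfun r'', ?_, ?_⟩
      · exact mem_gspan o (Set.mem_univ b)
          (Finset.mem_coe.mpr (Finset.mem_image.mpr ⟨r'', hr''F, rfl⟩))
      · rw [hΨeq, hrΨ r'' hr''F]
    have hΨfE : Ψ f ∈ Submodule.map Ψ M := hE (hR''eq ▸ hΨfker)
    obtain ⟨t, htM, hΨt⟩ := Submodule.mem_map.mp hΨfE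
    have hft : Ψ (f - t) = 0 := by rw [map_sub, hΨt, sub_self]
    obtain ⟨g, hg⟩ := hkerΨ (f - t) hft
    have hPg : g ∈ LinearMap.ker P' := by
      rw [LinearMap.mem_ker]
      apply hιinj
      have h8 := LinearMap.ext_iff.mp hPΦ g
      rw [LinearMap.comp_apply, LinearMap.comp_apply] at h8
      rw [map_zero, ← h8, hg, map_sub, LinearMap.mem_ker.mp hf,
        LinearMap.mem_ker.mp (hMker htM), sub_zero]
    have hΦg : Φ g ∈ gspan o (Ind o S V0) (Set.univ : Set H)
        (⇑Φ '' (R' : Set (Ind o S V0'))) := by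
      have hm := Submodule.mem_map_of_mem (f := Φ) (hR'eq ▸ hPg)
      rw [map_gspan o Φ id (fun s _ v => hΦeq s v)] at hm
      rwa [Set.image_id] at hm
    have hfeq : f = t + Φ g := by rw [hg]; abel
    rw [show ((GFin : Set (Ind o S V0)))
        = (MFin : Set (Ind o S V0)) ∪ (⇑Φ '' (R' : Set (Ind o S V0'))) from by
      rw [hGFin, Finset.coe_union, Finset.coe_image, Finset.coe_image], gspan_union]
    rw [hfeq]
    exact Submodule.add_mem_sup htM hΦg
  · refine (gspan_le_iff o).mpr ?_
    rintro b - w hw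
    have hwk : w ∈ LinearMap.ker P := hGsub hw
    rw [LinearMap.mem_ker, hPd, presMap_equivariant, ← hPd, LinearMap.mem_ker.mp hwk, smul_zero]

end ExactLemma

section SubAction

variable (o : Type) [CommRing o]
variable {H : Type} [Group H] {V : Type} [AddCommGroup V] [Module o V]
variable [DistribMulAction H V] [SMulCommClass H o V]

/-- The action of an open subgroup on a stable submodule. -/
def subDistrib (S : Subgroup H) (N : Submodule o V)
    (hst : IsStableSub o V (S : Set H) N) : DistribMulAction ↥S ↥N where
  smul s v := ⟨(s : H) • (v : V), hst (s : H) s.2 (v : V) v.2⟩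
  one_smul v := Subtype.ext (one_smul H (v : V))
  mul_smul a b v := Subtype.ext (mul_smul (a : H) (b : H) (v : V))
  smul_zero s := Subtype.ext (smul_zero (s : H))
  smul_add s a b := Subtype.ext (smul_add (s : H) (a : V) (b : V))

end SubAction
/-- If the category of smooth `o`-representations of `B₀` is noetherian and
`0 → V' → V → V'' → 0` is an exact sequence of smooth `B`-representations with `V'`, `V''` of
finite presentation, then there are compatible generating submodules `V₀' → V₀ → V₀''`
forming an exact sequence of `o[B₀]`-modules and yielding finite presentations. -/
theorem statement8
    (o : Type) [CommRing o]
    (B : Type) [Group B] [TopologicalSpace B] (B0 : Subgroup B) (hB0 : IsOpen (B0 : Set B))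
    (hnoeth : ∀ (W : Type) [AddCommGroup W] [Module o W] [DistribMulAction (↥B0) W]
      [SMulCommClass (↥B0) o W], IsSmoothRep o (↥B0) W →
      (∃ X : Finset W, gspan o W (Set.univ : Set ↥B0) (X : Set W) = ⊤) →
      ∀ N : Submodule o W, IsStableSub o W (Set.univ : Set ↥B0) N →
        IsFGOver o W (Set.univ : Set ↥B0) N)
    (V' : Type) [AddCommGroup V'] [Module o V']
    [DistribMulAction B V'] [SMulCommClass B o V']
    (hsm' : IsSmoothRep o B V')
    (V : Type) [AddCommGroup V] [Module o V]
    [DistribMulAction B V] [SMulCommClass B o V]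
    (hsm : IsSmoothRep o B V)
    (V'' : Type) [AddCommGroup V''] [Module o V'']
    [DistribMulAction B V''] [SMulCommClass B o V'']
    (hsm'' : IsSmoothRep o B V'')
    (ι : V' →ₗ[o] V) (hιinj : Function.Injective ⇑ι)
    (hιeq : ∀ (b : B) (v : V'), ι (b • v) = b • ι v)
    (π : V →ₗ[o] V'') (hπsurj : Function.Surjective ⇑π)
    (hπeq : ∀ (b : B) (v : V), π (b • v) = b • π v)
    (hexact : LinearMap.range ι = LinearMap.ker π)
    (hV' : HasFinitePres o V' B0) (hV'' : HasFinitePres o V'' B0) :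
    ∃ (V0' : Submodule o V') (V0 : Submodule o V) (V0'' : Submodule o V''),
      FinitelyPresentedVia o B0 V0' ∧ FinitelyPresentedVia o B0 V0 ∧
      FinitelyPresentedVia o B0 V0'' ∧
      Submodule.map ι V0' ≤ V0 ∧ Submodule.map π V0 = V0'' ∧
      Submodule.map ι V0' = V0 ⊓ LinearMap.ker π := by
  classical
  obtain ⟨V0'o, hst'o, hfg'o, hgen'o, P'o, hPres'o, hker'o⟩ := hV'
  obtain ⟨V0'', hst'', hfg'', hgen'', P'', hPres'', hker''⟩ := hV''
  rw [eq_presMap o hst'o hPres'o] at hker'o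
  rw [eq_presMap o hst'' hPres''] at hker''
  obtain ⟨X', hX'sub, hX'eq⟩ := hfg'o
  obtain ⟨X'', hX''sub, hX''eq⟩ := hfg''
  have hlift'' : ∀ x'' ∈ X'', ∃ v : V, π v = x'' := fun x'' _ => hπsurj x''
  choose! lfun hlfun using hlift''
  set GenF : Finset V := X'.image ι ∪ X''.image lfun with hGenF
  set W0 : Submodule o V := gspan o V (B0 : Set B) (GenF : Set V) with hW0
  have hstW0 : IsStableSub o V (B0 : Set B) W0 :=
    gspan_stable o (fun a ha b hb => B0.mul_mem ha hb) _
  have hfgW0 : IsFGOver o V (B0 : Set B) W0 :=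
    ⟨GenF, fun w hw => subset_gspan o B0.one_mem hw, rfl⟩
  -- ι(V0'o) ≤ W0
  have h1 : Submodule.map ι V0'o = gspan o V (B0 : Set B) (⇑ι '' (X' : Set V')) := by
    rw [hX'eq, map_gspan o ι id (fun s _ v => hιeq s v), Set.image_id]
  have hmapι : Submodule.map ι V0'o ≤ W0 := by
    rw [h1, hW0]
    refine gspan_mono o le_rfl ?_
    rw [hGenF, Finset.coe_union, Finset.coe_image]
    exact Set.subset_union_left
  -- π(W0) = V0''
  have hπW0 : Submodule.map π W0 = V0'' := by
    have h2 : Submodule.map π W0 = gspan o V'' (B0 : Set B) (⇑π '' (GenF : Set V)) := by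
      rw [hW0, map_gspan o π id (fun s _ v => hπeq s v), Set.image_id]
    apply le_antisymm
    · rw [h2]
      refine (gspan_le_iff o).mpr ?_
      rintro s hs w ⟨v, hv, rfl⟩
      rcases Finset.mem_union.mp (Finset.mem_coe.mp hv) with hv1 | hv2
      · obtain ⟨x', hx', rfl⟩ := Finset.mem_image.mp hv1
        have : π (ι x') = 0 := by
          have := hexact ▸ LinearMap.mem_range_self ι x'
          exact LinearMap.mem_ker.mp this
        rw [this, smul_zero]
        exact V0''.zero_mem
      · obtain ⟨x'', hx'', rfl⟩ := Finset.mem_image.mp hv2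
        rw [hlfun x'' hx'']
        exact hst'' s hs x'' (hX''sub (Finset.mem_coe.mpr hx''))
    · rw [hX''eq]
      refine (gspan_le_iff o).mpr ?_
      rintro s hs x'' hx''
      refine Submodule.mem_map.mpr ⟨s • lfun x'', ?_, ?_⟩
      · rw [hW0]
        refine mem_gspan o hs ?_
        rw [hGenF, Finset.coe_union]
        exact Set.mem_union_right _
          (Finset.mem_coe.mpr (Finset.mem_image.mpr ⟨x'', Finset.mem_coe.mp hx'', rfl⟩))
      · rw [hπeq, hlfun x'' (Finset.mem_coe.mp hx'')]
  -- W0 generates V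
  have hgenW0 : gspan o V (Set.univ : Set B) (W0 : Set V) = ⊤ := by
    have hkerle : LinearMap.ker π ≤ gspan o V (Set.univ : Set B) (W0 : Set V) := by
      rw [← hexact]
      rintro v hv
      obtain ⟨w, rfl⟩ := LinearMap.mem_range.mp hv
      have hw : w ∈ gspan o V' (Set.univ : Set B) (V0'o : Set V') := by
        rw [hgen'o]; trivial
      have h3 := Submodule.mem_map_of_mem (f := ι) hw
      rw [map_gspan o ι id (fun s _ v => hιeq s v), Set.image_id] at h3
      refine gspan_mono o le_rfl ?_ h3
      rintro z ⟨y, hy, rfl⟩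
      exact hmapι (Submodule.mem_map_of_mem hy)
    have hπtop : ∀ v : V, ∃ w ∈ gspan o V (Set.univ : Set B) (W0 : Set V), π w = π v := by
      intro v
      have h4 : π v ∈ gspan o V'' (Set.univ : Set B) (V0'' : Set V'') := by
        rw [hgen'']; trivial
      have h5 : gspan o V'' (Set.univ : Set B) (V0'' : Set V'')
          ≤ Submodule.map π (gspan o V (Set.univ : Set B) (W0 : Set V)) := by
        refine (gspan_le_iff o).mpr ?_
        rintro s - w hw
        have hw2 : w ∈ Submodule.map π W0 := by rw [hπW0]; exact hw
        obtain ⟨u, hu, rfl⟩ := Submodule.mem_map.mp hw2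
        exact Submodule.mem_map.mpr ⟨s • u, mem_gspan o (Set.mem_univ s) hu, hπeq s u⟩
      obtain ⟨w, hwg, hwv⟩ := Submodule.mem_map.mp (h5 h4)
      exact ⟨w, hwg, hwv⟩
    rw [eq_top_iff]
    rintro v -
    obtain ⟨w, hwg, hwv⟩ := hπtop v
    have h6 : v - w ∈ LinearMap.ker π := LinearMap.mem_ker.mpr (by rw [map_sub, hwv, sub_self])
    have h7 := hkerle h6
    have h8 : v = w + (v - w) := by abel
    rw [h8]
    exact Submodule.add_mem _ hwg h7
  -- the enlarged submodule of V'
  set V0'n : Submodule o V' := Submodule.comap ι W0 with hV0'n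
  have hιV0 : Submodule.map ι V0'n = W0 ⊓ LinearMap.ker π := by
    rw [hV0'n, Submodule.map_comap_eq, hexact, inf_comm]
  have hle'o : V0'o ≤ V0'n := by
    intro v hv
    exact Submodule.mem_comap.mpr (hmapι (Submodule.mem_map_of_mem hv))
  have hst'n : IsStableSub o V' (B0 : Set B) V0'n := by
    intro s hs v hv
    refine Submodule.mem_comap.mpr ?_
    rw [hιeq]
    exact hstW0 s hs _ (Submodule.mem_comap.mp hv)
  have hgen'n : gspan o V' (Set.univ : Set B) (V0'n : Set V') = ⊤ := by
    rw [eq_top_iff, ← hgen'o]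
    exact gspan_mono o le_rfl (fun x hx => hle'o hx)
  -- noetherian step: V0'n is finitely generated over o[B0]
  letI iD : DistribMulAction ↥B0 ↥W0 := subDistrib o B0 W0 hstW0
  haveI iC : SMulCommClass ↥B0 o ↥W0 := ⟨fun s a v => Subtype.ext (smul_comm (s : B) a (v : V))⟩
  have hsm0 : IsSmoothRep o ↥B0 ↥W0 := by
    intro v
    have hset : {h : ↥B0 | h • v = v} = (Subtype.val) ⁻¹' {b : B | b • (v : V) = (v : V)} := by
      ext h
      simp only [Set.mem_setOf_eq, Set.mem_preimage]
      exact ⟨fun hh => congrArg Subtype.val hh, fun hh => Subtype.ext hh⟩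
    rw [hset]
    exact (hsm (v : V)).preimage continuous_subtype_val
  have hjcomp : ∀ s ∈ (Set.univ : Set ↥B0), ∀ w : ↥W0,
      W0.subtype (s • w) = ((s : B)) • W0.subtype w := fun s _ w => rfl
  set X0 : Finset ↥W0 := GenF.attach.image
    (fun g => (⟨g.1, subset_gspan o B0.one_mem (Finset.mem_coe.mpr g.2)⟩ : ↥W0)) with hX0
  have hjX0 : ⇑W0.subtype '' (X0 : Set ↥W0) = (GenF : Set V) := by
    ext z
    constructor
    · rintro ⟨w, hw, rfl⟩
      obtain ⟨g, -, rfl⟩ := Finset.mem_image.mp (Finset.mem_coe.mp hw)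
      exact Finset.mem_coe.mpr g.2
    · intro hz
      exact ⟨⟨z, subset_gspan o B0.one_mem hz⟩,
        Finset.mem_coe.mpr (Finset.mem_image.mpr ⟨⟨z, Finset.mem_coe.mp hz⟩, GenF.mem_attach _, rfl⟩), rfl⟩
  have hX0top : gspan o (↥W0) (Set.univ : Set ↥B0) (X0 : Set ↥W0) = ⊤ := by
    apply Submodule.map_injective_of_injective (Submodule.injective_subtype W0)
    rw [map_gspan o W0.subtype (Subtype.val : ↥B0 → B) hjcomp, hjX0, Set.image_univ,
      Subtype.range_coe, Submodule.map_subtype_top]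
  set N0 : Submodule o ↥W0 := LinearMap.ker (π.comp W0.subtype) with hN0
  have hN0stab : IsStableSub o (↥W0) (Set.univ : Set ↥B0) N0 := by
    rintro s - v hv
    have hv' : π (v : V) = 0 := LinearMap.mem_ker.mp hv
    have hsv : ((s • v : ↥W0) : V) = (s : B) • (v : V) := rfl
    rw [LinearMap.mem_ker, LinearMap.comp_apply]
    show π ((s • v : ↥W0) : V) = 0
    rw [hsv, hπeq, hv', smul_zero]
  obtain ⟨Y, hYsub, hYeq⟩ := hnoeth ↥W0 hsm0 ⟨X0, hX0top⟩ N0 hN0stab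
  have hjN0 : Submodule.map W0.subtype N0 = W0 ⊓ LinearMap.ker π := by
    ext z
    constructor
    · rintro ⟨w, hw, rfl⟩
      exact ⟨w.2, hw⟩
    · rintro ⟨hz1, hz2⟩
      exact ⟨⟨z, hz1⟩, LinearMap.mem_ker.mpr (LinearMap.mem_ker.mp hz2), rfl⟩
  have hjYeq : Submodule.map W0.subtype N0
      = gspan o V (B0 : Set B) (⇑W0.subtype '' (Y : Set ↥W0)) := by
    rw [hYeq, map_gspan o W0.subtype (Subtype.val : ↥B0 → B) hjcomp, Set.image_univ,
      Subtype.range_coe]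
  have hYmem : ∀ y : ↥W0, y ∈ Y → ∃ x' ∈ V0'n, ι x' = (y : V) := by
    intro y hy
    have h7 : (y : V) ∈ W0 ⊓ LinearMap.ker π := by
      rw [← hjN0]
      exact Submodule.mem_map_of_mem (hYsub (Finset.mem_coe.mpr hy))
    rw [← hιV0] at h7
    exact Submodule.mem_map.mp h7
  choose! xfun hxmem hxeq using hYmem
  set X'n : Finset V' := Y.image xfun with hX'n
  have hX'nsub : (X'n : Set V') ⊆ (V0'n : Set V') := by
    intro z hz
    obtain ⟨y, hy, rfl⟩ := Finset.mem_image.mp (Finset.mem_coe.mp hz)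
    exact hxmem y hy
  have hιX'n : ⇑ι '' (X'n : Set V') = ⇑W0.subtype '' (Y : Set ↥W0) := by
    ext z
    constructor
    · rintro ⟨x, hx, rfl⟩
      obtain ⟨y, hy, rfl⟩ := Finset.mem_image.mp (Finset.mem_coe.mp hx)
      exact ⟨y, Finset.mem_coe.mpr hy, (hxeq y hy).symm⟩
    · rintro ⟨y, hy, rfl⟩
      exact ⟨xfun y, Finset.mem_coe.mpr (Finset.mem_image.mpr ⟨y, Finset.mem_coe.mp hy, rfl⟩),
        hxeq y (Finset.mem_coe.mp hy)⟩
  have hfg'n : IsFGOver o V' (B0 : Set B) V0'n := by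
    refine ⟨X'n, hX'nsub, ?_⟩
    apply Submodule.map_injective_of_injective hιinj
    rw [hιV0, map_gspan o ι id (fun s _ v => hιeq s v), Set.image_id, hιX'n, ← hjYeq, hjN0]
  -- finite presentation for V0'n by the enlargement lemma
  have hker'n := fg_ker_enlarge o hst'o hst'n hle'o hgen'o hfg'n hker'o
  have hFP'n : FinitelyPresentedVia o B0 V0'n :=
    ⟨hst'n, hfg'n, hgen'n, presMap o B0 V0'n, presMap_isPres o hst'n, hker'n⟩
  -- finite presentation for W0 by the exactness lemma
  have hkerW0 := fg_ker_exact o ι hιinj hιeq π hπeq hexact hst'n hstW0 hst''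
    hgen'n hιV0 hπW0 hker'n hker''
  have hFPW0 : FinitelyPresentedVia o B0 W0 :=
    ⟨hstW0, hfgW0, hgenW0, presMap o B0 W0, presMap_isPres o hstW0, hkerW0⟩
  have hFP'' : FinitelyPresentedVia o B0 V0'' :=
    ⟨hst'', ⟨X'', hX''sub, hX''eq⟩, hgen'', presMap o B0 V0'', presMap_isPres o hst'', hker''⟩
  exact ⟨V0'n, W0, V0'', hFP'n, hFPW0, hFP'',
    le_trans (le_of_eq hιV0) inf_le_left, hπW0, hιV0⟩
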